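/- Stability for the QNL operator: if ν := φ''_F - 4|φ''_{2F}| > 0, then h v · L^{qnl,h} v ≥ ν ||Dv||²_{l²} for all 2N-periodic v, and consequently if L^{qnl,h} v = b with Σ b_j = 0 and v mean-zero, then ||Dv||_{l²} ≤ (1/(2ν))||b||_{l²}. -/

import Mathlib

/-- The QNL operator `L^{qnl,h}` for indices `0 ≤ j ≤ N` (`a = φ''_F`, `b = φ''_{2F}`). -/
noncomputable def LqnlP (a b h : ℝ) (K : ℤ) (u : ℤ → ℝ) (j : ℤ) : ℝ :=
  a * (-u (j + 1) + 2 * u j - u (j - 1)) / h ^ 2 +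
  (if j ≤ K - 1 then
      4 * b * (-u (j + 2) + 2 * u j - u (j - 2)) / (4 * h ^ 2)
    else if j = K then
      4 * b * (-u (j + 2) + 2 * u j - u (j - 2)) / (4 * h ^ 2)
        - b * (-u (j + 2) + 2 * u (j + 1) - u j) / h ^ 2
    else if j = K + 1 then
      4 * b * (-u (j + 1) + 2 * u j - u (j - 1)) / h ^ 2
        + b * (-u j + 2 * u (j - 1) - u (j - 2)) / h ^ 2
    else
      4 * b * (-u (j + 1) + 2 * u j - u (j - 1)) / h ^ 2)

/-- The QNL operator extended to all indices by the symmetry `S L S = L`,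
where `(Su)_j = -u_{-j}`. -/
noncomputable def Lqnl (a b h : ℝ) (K : ℤ) (u : ℤ → ℝ) (j : ℤ) : ℝ :=
  if 0 ≤ j then LqnlP a b h K u j
  else -LqnlP a b h K (fun i => -u (-i)) (-j)

open Finset

/-- helper: Icc (a+1) b = Ioc a b in ℤ -/
lemma QnlAux.Icc_add_one_left (a b : ℤ) : Finset.Icc (a+1) b = Finset.Ioc a b := by
  ext x; simp only [Finset.mem_Icc, Finset.mem_Ioc]; omega

lemma QnlAux.sum_top (a b : ℤ) (h : a ≤ b + 1) (f : ℤ → ℝ) :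
    ∑ j ∈ Finset.Icc a (b+1), f j = (∑ j ∈ Finset.Icc a b, f j) + f (b+1) := by
  have e : Finset.Icc a (b+1) = insert (b+1) (Finset.Icc a b) := by
    ext x; simp only [Finset.mem_Icc, Finset.mem_insert]; omega
  rw [e, Finset.sum_insert (by simp only [Finset.mem_Icc]; omega)]
  ring

/-- telescoping sum over Icc -/
lemma QnlAux.sum_tele (f : ℤ → ℝ) (m : ℤ) : ∀ n, m - 1 ≤ n →
    ∑ j ∈ Finset.Icc m n, (f (j+1) - f j) = f (n+1) - f m := by
  suffices H : ∀ k : ℕ, ∑ j ∈ Finset.Icc m (m - 1 + k), (f (j+1) - f j)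
      = f (m - 1 + k + 1) - f m by
    intro n hn
    obtain ⟨k, hk⟩ := Int.le.dest hn
    rw [← hk]; exact H k
  intro k
  induction k with
  | zero =>
      rw [Finset.Icc_eq_empty (by omega), Finset.sum_empty]
      rw [show m - 1 + (0:ℕ) + 1 = m by push_cast; ring, sub_self]
  | succ k ih =>
      rw [show m - 1 + ((k:ℕ)+1 : ℕ) = (m - 1 + k) + 1 by push_cast; ring,
        QnlAux.sum_top m (m-1+k) (by omega), ih]
      ring

/-- shift by one for periodic functions -/
lemma QnlAux.sum_shift1 (N : ℤ) (hN : 1 ≤ N) (g : ℤ → ℝ)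
    (hg : ∀ j, g (j + 2*N) = g j) :
    ∑ j ∈ Finset.Icc (-N+1) N, g (j+1) = ∑ j ∈ Finset.Icc (-N+1) N, g j := by
  have h1 : ∑ j ∈ Finset.Icc (-N+1) N, g (j+1)
      = ∑ j ∈ Finset.Icc (-N+2) (N+1), g j := by
    rw [show (-N+2 : ℤ) = (-N+1) + 1 by ring, ← map_add_right_Icc (-N+1) N 1,
      Finset.sum_map]
    rfl
  rw [h1, QnlAux.sum_top (-N+2) N (by omega),
    show (-N+2 : ℤ) = (-N+1)+1 by ring, QnlAux.Icc_add_one_left,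
    Finset.Icc_eq_cons_Ioc (by omega : (-N+1 : ℤ) ≤ N), Finset.sum_cons]
  have e : g (N+1) = g (-N+1) := by
    have := hg (-N+1)
    rw [show -N+1+2*N = N+1 by ring] at this
    exact this
  rw [e]; ring

/-- shift by arbitrary t for periodic functions -/
lemma QnlAux.sum_shift (N : ℤ) (hN : 1 ≤ N) (g : ℤ → ℝ)
    (hg : ∀ j, g (j + 2*N) = g j) (t : ℤ) :
    ∑ j ∈ Finset.Icc (-N+1) N, g (j+t) = ∑ j ∈ Finset.Icc (-N+1) N, g j := by
  induction t using Int.induction_on with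
  | zero => simp
  | succ t ih =>
      have h1 := QnlAux.sum_shift1 N hN (fun j => g (j + t)) (by
        intro j; beta_reduce
        rw [show j + 2*N + (t:ℤ) = (j+t) + 2*N by ring, hg])
      beta_reduce at h1
      have h2 : ∑ j ∈ Finset.Icc (-N+1) N, g (j + ((t:ℤ)+1))
          = ∑ j ∈ Finset.Icc (-N+1) N, g ((j+1) + t) := by
        apply Finset.sum_congr rfl; intro j _; rw [show j + ((t:ℤ)+1) = (j+1)+t by ring]
      rw [h2, h1, ih]
  | pred t ih =>
      have h1 := QnlAux.sum_shift1 N hN (fun j => g (j + (-(t:ℤ)-1))) (by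
        intro j; beta_reduce
        rw [show j + 2*N + (-(t:ℤ)-1) = (j+(-(t:ℤ)-1)) + 2*N by ring, hg])
      beta_reduce at h1
      have h2 : ∑ j ∈ Finset.Icc (-N+1) N, g ((j+1) + (-(t:ℤ)-1))
      = ∑ j ∈ Finset.Icc (-N+1) N, g j := by
        rw [← ih]
        apply Finset.sum_congr rfl; intro j _; rw [show j + 1 + (-(t:ℤ)-1) = j + -(t:ℤ) by ring]
      have h3 : ∑ j ∈ Finset.Icc (-N+1) N, g (j + (-(t:ℤ)-1))
          = ∑ j ∈ Finset.Icc (-N+1) N, g j := h1.symm.trans h2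
      exact h3

/-- sum over any length-2N window equals sum over the standard window -/
lemma QnlAux.sum_window (N : ℤ) (hN : 1 ≤ N) (g : ℤ → ℝ)
    (hg : ∀ j, g (j + 2*N) = g j) (c : ℤ) :
    ∑ j ∈ Finset.Icc (c+1) (c+2*N), g j = ∑ j ∈ Finset.Icc (-N+1) N, g j := by
  have h1 : ∑ j ∈ Finset.Icc (-N+1) N, g (j + (c+N)) = ∑ j ∈ Finset.Icc (-N+1) N, g j :=
    QnlAux.sum_shift N hN g hg (c+N)
  rw [← h1, show (c+1 : ℤ) = (-N+1) + (c+N) by ring, show c+2*N = N + (c+N) by ring,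
    ← map_add_right_Icc (-N+1) N (c+N), Finset.sum_map]
  rfl

lemma QnlAux.sum_sq_Icc_nat : ∀ k : ℕ,
    ∑ m ∈ Finset.Icc (0:ℤ) (k:ℤ), ((m:ℝ))^2
      = ((k:ℤ):ℝ)*(((k:ℤ):ℝ)+1)*(2*((k:ℤ):ℝ)+1)/6 := by
  intro k
  induction k with
  | zero => simp
  | succ k ih =>
      rw [show ((k+1:ℕ):ℤ) = (k:ℤ)+1 by push_cast; ring,
        QnlAux.sum_top 0 (k:ℤ) (by omega), ih]
      push_cast; ring

lemma QnlAux.sum_sq_Icc (n : ℤ) (hn : 0 ≤ n) :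
    ∑ m ∈ Finset.Icc (0:ℤ) n, ((m:ℝ))^2 = (n:ℝ)*((n:ℝ)+1)*(2*(n:ℝ)+1)/6 := by
  obtain ⟨k, hk⟩ := Int.le.dest hn
  have := QnlAux.sum_sq_Icc_nat k
  rw [show ((k:ℕ):ℤ) = n by omega] at this
  exact this

lemma QnlAux.sum_reflect (N : ℤ) (hN : 1 ≤ N) (f : ℤ → ℝ) :
    ∑ m ∈ Finset.Icc (N+1) (2*N-1), f (2*N - m) = ∑ m ∈ Finset.Icc (1:ℤ) (N-1), f m := by
  have e : Finset.Icc (N+1) (2*N-1) =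
      Finset.map ⟨fun x => 2*N - x, fun a b hab => by simp only [] at hab; omega⟩
      (Finset.Icc (1:ℤ) (N-1)) := by
    ext x
    simp only [Finset.mem_Icc, Finset.mem_map, Function.Embedding.coeFn_mk]
    constructor
    · intro hx; exact ⟨2*N - x, by omega, show 2*N - (2*N - x) = x by omega⟩
    · rintro ⟨a, ha, rfl⟩; show N+1 ≤ 2*N - a ∧ 2*N - a ≤ 2*N-1; omega
  rw [e, Finset.sum_map]
  apply Finset.sum_congr rfl
  intro m _
  show f (2*N - (2*N - m)) = f m
  rw [show 2*N - (2*N - m) = m by ring]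

/-- telescoping of increments -/
lemma QnlAux.tele_v (v : ℤ → ℝ) (j : ℤ) : ∀ k : ℕ,
    v (j + (k:ℤ)) - v j = ∑ t ∈ Finset.Icc (1:ℤ) (k:ℤ), (v (j+t) - v (j+t-1)) := by
  intro k
  induction k with
  | zero => simp
  | succ k ih =>
      rw [show ((k+1:ℕ):ℤ) = (k:ℤ)+1 by push_cast; ring,
        QnlAux.sum_top 1 (k:ℤ) (by omega), ← ih,
        show j + ((k:ℤ)+1) - 1 = j + (k:ℤ) by ring]
      ring

/-- Cauchy–Schwarz for increments -/
lemma QnlAux.cs_icc (m : ℤ) (hm : 0 ≤ m) (f : ℤ → ℝ) :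
    (∑ t ∈ Finset.Icc (1:ℤ) m, f t)^2 ≤ (m:ℝ) * ∑ t ∈ Finset.Icc (1:ℤ) m, (f t)^2 := by
  have h := sq_sum_le_card_mul_sum_sq (s := Finset.Icc (1:ℤ) m) (f := f)
  have hc : ((Finset.Icc (1:ℤ) m).card : ℝ) = (m:ℝ) := by
    rw [Int.card_Icc]
    rw [show m + 1 - 1 = m by ring]
    exact_mod_cast Int.toNat_of_nonneg hm
  rw [hc] at h
  exact h

lemma QnlAux.poincare (N : ℤ) (hN : 1 ≤ N) (v : ℤ → ℝ)
    (per : ∀ j, v (j + 2*N) = v j)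
    (mean0 : ∑ j ∈ Finset.Icc (-N+1) N, v j = 0) :
    ∑ j ∈ Finset.Icc (-N+1) N, (v j)^2
      ≤ (N:ℝ)^2/4 * ∑ j ∈ Finset.Icc (-N+1) N, (v j - v (j-1))^2 := by
  have hN0 : (0:ℝ) < (N:ℝ) := by exact_mod_cast hN
  have perw : ∀ j : ℤ, (fun i => (v i - v (i-1))^2) (j + 2*N)
      = (fun i => (v i - v (i-1))^2) j := by
    intro j; simp only []
    have e1 := per j
    have e2 := per (j-1)
    rw [show j - 1 + 2*N = j + 2*N - 1 by ring] at e2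
    rw [e1, e2]
  have persq : ∀ j : ℤ, (fun i => (v i)^2) (j + 2*N) = (fun i => (v i)^2) j := by
    intro j; simp only [per j]
  -- increments bound
  have keyA : ∀ m : ℤ, 0 ≤ m →
      ∑ j ∈ Finset.Icc (-N+1) N, (v (j+m) - v j)^2
        ≤ (m:ℝ)^2 * ∑ j ∈ Finset.Icc (-N+1) N, (v j - v (j-1))^2 := by
    intro m hm
    obtain ⟨k, hk⟩ := Int.le.dest hm
    have hmk : m = (k:ℤ) := by omega
    subst hmk
    have step1 : ∀ j : ℤ, (v (j+(k:ℤ)) - v j)^2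
        ≤ ((k:ℤ):ℝ) * ∑ t ∈ Finset.Icc (1:ℤ) (k:ℤ), (v (j+t) - v (j+t-1))^2 := by
      intro j
      rw [QnlAux.tele_v v j k]
      exact QnlAux.cs_icc (k:ℤ) (by omega) _
    calc ∑ j ∈ Finset.Icc (-N+1) N, (v (j+(k:ℤ)) - v j)^2
        ≤ ∑ j ∈ Finset.Icc (-N+1) N,
            ((k:ℤ):ℝ) * ∑ t ∈ Finset.Icc (1:ℤ) (k:ℤ), (v (j+t) - v (j+t-1))^2 :=
          Finset.sum_le_sum (fun j _ => step1 j)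
      _ = ((k:ℤ):ℝ) * ∑ t ∈ Finset.Icc (1:ℤ) (k:ℤ),
            ∑ j ∈ Finset.Icc (-N+1) N, (v (j+t) - v (j+t-1))^2 := by
          rw [← Finset.mul_sum, Finset.sum_comm]
      _ = ((k:ℤ):ℝ) * ∑ t ∈ Finset.Icc (1:ℤ) (k:ℤ),
            ∑ j ∈ Finset.Icc (-N+1) N, (v j - v (j-1))^2 := by
          congr 1
          apply Finset.sum_congr rfl
          intro t _
          exact QnlAux.sum_shift N hN (fun i => (v i - v (i-1))^2) perw t
      _ = (((k:ℤ):ℝ))^2 * ∑ j ∈ Finset.Icc (-N+1) N, (v j - v (j-1))^2 := by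
          rw [Finset.sum_const, nsmul_eq_mul, Int.card_Icc,
            show (k:ℤ) + 1 - 1 = (k:ℤ) by ring, Int.toNat_natCast]
          push_cast; ring
  -- reflection
  have keyRefl : ∀ m : ℤ,
      ∑ j ∈ Finset.Icc (-N+1) N, (v (j+m) - v j)^2
        = ∑ j ∈ Finset.Icc (-N+1) N, (v (j+(2*N-m)) - v j)^2 := by
    intro m
    have hshift := QnlAux.sum_shift N hN (fun j => (v (j + (2*N - m)) - v j)^2)
      (by
        intro j; beta_reduce
        rw [show j + 2*N + (2*N - m) = (j + (2*N-m)) + 2*N by ring, per, per]) (m - 2*N)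
    beta_reduce at hshift
    rw [← hshift]
    apply Finset.sum_congr rfl
    intro j _
    rw [show j + (m - 2*N) + (2*N - m) = j by ring]
    have e : v (j + (m - 2*N)) = v (j + m) := by
      have := per (j + (m - 2*N))
      rw [show j + (m - 2*N) + 2*N = j + m by ring] at this
      exact this.symm
    rw [e]
    ring
  -- double sum identity
  have keyDS : ∑ m ∈ Finset.Icc (0:ℤ) (2*N-1),
      ∑ j ∈ Finset.Icc (-N+1) N, (v (j+m) - v j)^2
        = 4*(N:ℝ) * ∑ j ∈ Finset.Icc (-N+1) N, (v j)^2 := by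
    rw [Finset.sum_comm]
    have hwin : ∀ (f : ℤ → ℝ), (∀ i, f (i + 2*N) = f i) → ∀ j : ℤ,
        ∑ m ∈ Finset.Icc (0:ℤ) (2*N-1), f (j+m) = ∑ i ∈ Finset.Icc (-N+1) N, f i := by
      intro f hf j
      have h1 : ∑ m ∈ Finset.Icc (0:ℤ) (2*N-1), f (j+m)
          = ∑ i ∈ Finset.Icc ((j-1)+1) ((j-1)+2*N), f i := by
        rw [show (j-1)+1 = 0 + j by ring, show (j-1)+2*N = (2*N-1) + j by ring,
          ← map_add_right_Icc 0 (2*N-1) j, Finset.sum_map]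
        apply Finset.sum_congr rfl
        intro m _
        simp only [addRightEmbedding_apply]
        rw [show m + j = j + m by ring]
      rw [h1]
      exact QnlAux.sum_window N hN f hf (j-1)
    have hcard : ((Finset.Icc (0:ℤ) (2*N-1)).card : ℝ) = 2*(N:ℝ) := by
      rw [Int.card_Icc, show 2*N-1+1-0 = 2*N by ring]
      exact_mod_cast Int.toNat_of_nonneg (show (0:ℤ) ≤ 2*N by omega)
    have perj : ∀ j ∈ Finset.Icc (-N+1) N,
        ∑ m ∈ Finset.Icc (0:ℤ) (2*N-1), (v (j+m) - v j)^2
          = (∑ i ∈ Finset.Icc (-N+1) N, (v i)^2) + 2*(N:ℝ)*(v j)^2 := by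
      intro j _
      have e1 : ∑ m ∈ Finset.Icc (0:ℤ) (2*N-1), (v (j+m) - v j)^2
          = (∑ m ∈ Finset.Icc (0:ℤ) (2*N-1), (v (j+m))^2)
            - 2 * v j * (∑ m ∈ Finset.Icc (0:ℤ) (2*N-1), v (j+m))
            + ((Finset.Icc (0:ℤ) (2*N-1)).card : ℝ) * (v j)^2 := by
        rw [Finset.sum_congr rfl (fun m _ => show (v (j+m) - v j)^2
          = ((v (j+m))^2 - 2 * v j * v (j+m)) + (v j)^2 from by ring)]
        rw [Finset.sum_add_distrib, Finset.sum_sub_distrib, ← Finset.mul_sum,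
          Finset.sum_const, nsmul_eq_mul]
      rw [e1, hwin (fun i => (v i)^2) persq j, hwin v per j, mean0, hcard]
      ring
    have hcard2 : (((Finset.Icc (-N+1) N).card : ℕ) : ℝ) = 2*(N:ℝ) := by
      rw [Int.card_Icc, show N+1-(-N+1) = 2*N by ring]
      exact_mod_cast Int.toNat_of_nonneg (show (0:ℤ) ≤ 2*N by omega)
    rw [Finset.sum_congr rfl perj, Finset.sum_add_distrib, Finset.sum_const,
      nsmul_eq_mul, hcard2, ← Finset.mul_sum]
    ring
  -- now combine
  set SV := ∑ j ∈ Finset.Icc (-N+1) N, (v j)^2 with hSV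
  set D := ∑ j ∈ Finset.Icc (-N+1) N, (v j - v (j-1))^2 with hD
  have hDnn : 0 ≤ D := Finset.sum_nonneg (fun j _ => sq_nonneg _)
  have hsplit : Finset.Icc (0:ℤ) (2*N-1)
      = Finset.Icc (0:ℤ) N ∪ Finset.Icc (N+1) (2*N-1) := by
    ext x; simp only [Finset.mem_Icc, Finset.mem_union]; omega
  have hdisj : Disjoint (Finset.Icc (0:ℤ) N) (Finset.Icc (N+1) (2*N-1)) := by
    rw [Finset.disjoint_left]
    intro x hx hx'
    simp only [Finset.mem_Icc] at hx hx'
    omega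
  have hbound1 : ∑ m ∈ Finset.Icc (0:ℤ) N,
      ∑ j ∈ Finset.Icc (-N+1) N, (v (j+m) - v j)^2
        ≤ ((N:ℝ)*((N:ℝ)+1)*(2*(N:ℝ)+1)/6) * D := by
    calc ∑ m ∈ Finset.Icc (0:ℤ) N, ∑ j ∈ Finset.Icc (-N+1) N, (v (j+m) - v j)^2
        ≤ ∑ m ∈ Finset.Icc (0:ℤ) N, ((m:ℝ))^2 * D :=
          Finset.sum_le_sum (fun m hm => keyA m (by
            simp only [Finset.mem_Icc] at hm; omega))
      _ = (∑ m ∈ Finset.Icc (0:ℤ) N, ((m:ℝ))^2) * D := by rw [Finset.sum_mul]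
      _ = ((N:ℝ)*((N:ℝ)+1)*(2*(N:ℝ)+1)/6) * D := by
          rw [QnlAux.sum_sq_Icc N (by omega)]
  have hbound2 : ∑ m ∈ Finset.Icc (N+1) (2*N-1),
      ∑ j ∈ Finset.Icc (-N+1) N, (v (j+m) - v j)^2
        ≤ (((N:ℝ)-1)*(N:ℝ)*(2*(N:ℝ)-1)/6) * D := by
    have hterm : ∀ m ∈ Finset.Icc (N+1) (2*N-1),
        ∑ j ∈ Finset.Icc (-N+1) N, (v (j+m) - v j)^2
          ≤ (((2*N-m : ℤ)):ℝ)^2 * D := by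
      intro m hm
      simp only [Finset.mem_Icc] at hm
      have h1 := keyRefl m
      rw [h1]
      have h2 := keyA (2*N - m) (by omega)
      push_cast at h2 ⊢
      exact h2
    calc ∑ m ∈ Finset.Icc (N+1) (2*N-1), ∑ j ∈ Finset.Icc (-N+1) N, (v (j+m) - v j)^2
        ≤ ∑ m ∈ Finset.Icc (N+1) (2*N-1), (((2*N-m : ℤ)):ℝ)^2 * D :=
          Finset.sum_le_sum hterm
      _ = (∑ m ∈ Finset.Icc (N+1) (2*N-1), (((2*N-m : ℤ)):ℝ)^2) * D := by
          rw [Finset.sum_mul]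
      _ = (∑ m ∈ Finset.Icc (1:ℤ) (N-1), ((m:ℝ))^2) * D := by
          rw [QnlAux.sum_reflect N hN (fun x => ((x:ℝ))^2)]
      _ = (∑ m ∈ Finset.Icc (0:ℤ) (N-1), ((m:ℝ))^2) * D := by
          congr 1
          rcases le_or_gt 1 N with h | h
          · rcases eq_or_lt_of_le h with h1 | h1
            · rw [show N - 1 = (0:ℤ) by omega]
              rw [Finset.Icc_eq_empty (by omega), Finset.sum_empty]
              simp
            · have e : Finset.Icc (0:ℤ) (N-1) = insert 0 (Finset.Icc (1:ℤ) (N-1)) := by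
                ext x; simp only [Finset.mem_Icc, Finset.mem_insert]; omega
              rw [e, Finset.sum_insert (by simp only [Finset.mem_Icc]; omega)]
              simp
          · omega
      _ = (((N:ℝ)-1)*(N:ℝ)*(2*(N:ℝ)-1)/6) * D := by
          rw [QnlAux.sum_sq_Icc (N-1) (by omega)]
          push_cast
          ring
  have htotal : 4*(N:ℝ) * SV ≤ ((N:ℝ)*(2*(N:ℝ)^2+1)/3) * D := by
    rw [← keyDS, hsplit, Finset.sum_union hdisj]
    calc (∑ m ∈ Finset.Icc (0:ℤ) N, ∑ j ∈ Finset.Icc (-N+1) N, (v (j+m) - v j)^2)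
          + ∑ m ∈ Finset.Icc (N+1) (2*N-1), ∑ j ∈ Finset.Icc (-N+1) N, (v (j+m) - v j)^2
        ≤ ((N:ℝ)*((N:ℝ)+1)*(2*(N:ℝ)+1)/6) * D + (((N:ℝ)-1)*(N:ℝ)*(2*(N:ℝ)-1)/6) * D :=
          add_le_add hbound1 hbound2
      _ = ((N:ℝ)*(2*(N:ℝ)^2+1)/3) * D := by ring
  have hNN : (1:ℝ) ≤ (N:ℝ) := by exact_mod_cast hN
  have h1sq : (1:ℝ) ≤ (N:ℝ)^2 := by nlinarith
  have hstep : (N:ℝ)*(2*(N:ℝ)^2+1)/3 * D ≤ (N:ℝ)^3 * D := by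
    apply mul_le_mul_of_nonneg_right _ hDnn
    nlinarith [mul_le_mul_of_nonneg_left h1sq (show (0:ℝ) ≤ (N:ℝ) by linarith)]
  have hfin : 4*(N:ℝ)*SV ≤ (N:ℝ)^3 * D := htotal.trans hstep
  have h4N : (0:ℝ) < 4*(N:ℝ) := by linarith
  have e : (N:ℝ)^2/4*D = ((N:ℝ)^3*D)/(4*(N:ℝ)) := by
    field_simp
  rw [e]
  rw [le_div_iff₀ h4N]
  linarith [hfin]


/-- telescoping flux for the QNL quadratic-form identity -/
noncomputable def QnlAux.flux (a b : ℝ) (K : ℤ) (v : ℤ → ℝ) (j : ℤ) : ℝ :=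
  a * (v (j-1)^2 - v (j-1) * v j) +
  b * (if j ≤ -K - 1 then 4*v (j-1)^2 - 4*v (j-1) * v j
       else if j = -K then 3*v (j-1)^2 - 2*v (j-1) * v j - v (j-1) * v (j+1)
       else if j ≤ K then v (j-2) * v j + 3*v (j-1)^2 - 4*v (j-1) * v j
          - v (j-1) * v (j+1) + v j^2
       else if j = K + 1 then v (j-2) * v j + 4*v (j-1)^2 - 6*v (j-1) * v j + v j^2
       else 4*v (j-1)^2 - 4*v (j-1) * v j)

/-- pointwise energy density -/
noncomputable def QnlAux.dens (a b : ℝ) (K : ℤ) (v : ℤ → ℝ) (j : ℤ) : ℝ :=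
  (a + 4*b) * (v j - v (j-1))^2 +
  (if -K ≤ j ∧ j ≤ K then (-b) * (v (j+1) - 2*v j + v (j-1))^2 else 0)

lemma QnlAux.lqnl_neg (a b h : ℝ) (K : ℤ) (v : ℤ → ℝ) (j : ℤ) (hj : j < 0) :
    Lqnl a b h K v j =
      a * (-v (j + 1) + 2 * v j - v (j - 1)) / h ^ 2 +
      (if -j ≤ K - 1 then 4 * b * (-v (j + 2) + 2 * v j - v (j - 2)) / (4 * h ^ 2)
        else if -j = K then 4 * b * (-v (j + 2) + 2 * v j - v (j - 2)) / (4 * h ^ 2)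
          - b * (-v (j - 2) + 2 * v (j - 1) - v j) / h ^ 2
        else if -j = K + 1 then 4 * b * (-v (j - 1) + 2 * v j - v (j + 1)) / h ^ 2
          + b * (-v j + 2 * v (j + 1) - v (j + 2)) / h ^ 2
        else 4 * b * (-v (j + 1) + 2 * v j - v (j - 1)) / h ^ 2) := by
  rw [Lqnl, if_neg (by omega)]
  simp only [LqnlP]
  rw [show -(-j + 1) = j - 1 by ring, show -(-j - 1) = j + 1 by ring,
    show -(-j + 2) = j - 2 by ring, show -(-j - 2) = j + 2 by ring, neg_neg]
  split_ifs with h1 h2 h3 <;> ring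

lemma QnlAux.row_id (a b h : ℝ) (hh : h ≠ 0) (K : ℤ) (hK : 2 ≤ K) (v : ℤ → ℝ) (j : ℤ) :
    v j * Lqnl a b h K v j
      = (QnlAux.dens a b K v j
          + (QnlAux.flux a b K v (j+1) - QnlAux.flux a b K v j)) / h^2 := by
  rcases lt_or_ge j 0 with hj | hj
  · rw [QnlAux.lqnl_neg a b h K v j hj]
    simp only [QnlAux.dens, QnlAux.flux]
    rcases (by omega : j ≤ -K-2 ∨ j = -K-1 ∨ j = -K ∨ (-K+1 ≤ j ∧ j ≤ -1)) with h1|h1|h1|h1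
    · rw [if_neg (show ¬(-j ≤ K-1) by omega), if_neg (show ¬(-j = K) by omega),
        if_neg (show ¬(-j = K+1) by omega),
        if_neg (show ¬(-K ≤ j ∧ j ≤ K) by omega),
        if_pos (show j+1 ≤ -K-1 by omega), if_pos (show j ≤ -K-1 by omega)]
      field_simp; ring
    · rw [if_neg (show ¬(-j ≤ K-1) by omega), if_neg (show ¬(-j = K) by omega),
        if_pos (show -j = K+1 by omega),
        if_neg (show ¬(-K ≤ j ∧ j ≤ K) by omega),
        if_neg (show ¬(j+1 ≤ -K-1) by omega), if_pos (show j+1 = -K by omega),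
        if_pos (show j ≤ -K-1 by omega)]
      field_simp; ring
    · rw [if_neg (show ¬(-j ≤ K-1) by omega), if_pos (show -j = K by omega),
        if_pos (show (-K ≤ j ∧ j ≤ K) by omega),
        if_neg (show ¬(j+1 ≤ -K-1) by omega), if_neg (show ¬(j+1 = -K) by omega),
        if_pos (show j+1 ≤ K by omega),
        if_neg (show ¬(j ≤ -K-1) by omega), if_pos (show j = -K by omega)]
      field_simp; ring
    · rw [if_pos (show -j ≤ K-1 by omega),
        if_pos (show (-K ≤ j ∧ j ≤ K) by omega),
        if_neg (show ¬(j+1 ≤ -K-1) by omega), if_neg (show ¬(j+1 = -K) by omega),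
        if_pos (show j+1 ≤ K by omega),
        if_neg (show ¬(j ≤ -K-1) by omega), if_neg (show ¬(j = -K) by omega),
        if_pos (show j ≤ K by omega)]
      field_simp; ring
  · rw [Lqnl, if_pos (by omega)]
    simp only [LqnlP, QnlAux.dens, QnlAux.flux]
    rcases (by omega : (0 ≤ j ∧ j ≤ K-1) ∨ j = K ∨ j = K+1 ∨ K+2 ≤ j) with h1|h1|h1|h1
    · rw [if_pos (show j ≤ K-1 by omega),
        if_pos (show (-K ≤ j ∧ j ≤ K) by omega),
        if_neg (show ¬(j+1 ≤ -K-1) by omega), if_neg (show ¬(j+1 = -K) by omega),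
        if_pos (show j+1 ≤ K by omega),
        if_neg (show ¬(j ≤ -K-1) by omega), if_neg (show ¬(j = -K) by omega),
        if_pos (show j ≤ K by omega)]
      field_simp; ring
    · rw [if_neg (show ¬(j ≤ K-1) by omega), if_pos (show j = K by omega),
        if_pos (show (-K ≤ j ∧ j ≤ K) by omega),
        if_neg (show ¬(j+1 ≤ -K-1) by omega), if_neg (show ¬(j+1 = -K) by omega),
        if_neg (show ¬(j+1 ≤ K) by omega), if_pos (show j+1 = K+1 by omega),
        if_neg (show ¬(j ≤ -K-1) by omega), if_neg (show ¬(j = -K) by omega),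
        if_pos (show j ≤ K by omega)]
      field_simp; ring
    · rw [if_neg (show ¬(j ≤ K-1) by omega), if_neg (show ¬(j = K) by omega),
        if_pos (show j = K+1 by omega),
        if_neg (show ¬(-K ≤ j ∧ j ≤ K) by omega),
        if_neg (show ¬(j+1 ≤ -K-1) by omega), if_neg (show ¬(j+1 = -K) by omega),
        if_neg (show ¬(j+1 ≤ K) by omega), if_neg (show ¬(j+1 = K+1) by omega),
        if_neg (show ¬(j ≤ -K-1) by omega), if_neg (show ¬(j = -K) by omega),
        if_neg (show ¬(j ≤ K) by omega), if_pos (show j = K+1 by omega)]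
      field_simp; ring
    · rw [if_neg (show ¬(j ≤ K-1) by omega), if_neg (show ¬(j = K) by omega),
        if_neg (show ¬(j = K+1) by omega),
        if_neg (show ¬(-K ≤ j ∧ j ≤ K) by omega),
        if_neg (show ¬(j+1 ≤ -K-1) by omega), if_neg (show ¬(j+1 = -K) by omega),
        if_neg (show ¬(j+1 ≤ K) by omega), if_neg (show ¬(j+1 = K+1) by omega),
        if_neg (show ¬(j ≤ -K-1) by omega), if_neg (show ¬(j = -K) by omega),
        if_neg (show ¬(j ≤ K) by omega), if_neg (show ¬(j = K+1) by omega)]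
      field_simp; ring

lemma QnlAux.flux_periodic_end (N K : ℤ) (hN : 1 ≤ N) (hK : 2 ≤ K) (hKN : K ≤ N - 2)
    (a b : ℝ) (v : ℤ → ℝ) (per : ∀ j, v (j + 2*N) = v j) :
    QnlAux.flux a b K v (N+1) = QnlAux.flux a b K v (-N+1) := by
  have e0 : v (N+1-1) = v (-N+1-1) := by
    have := per (-N+1-1)
    rw [show -N+1-1+2*N = N+1-1 by ring] at this
    exact this
  have e1 : v (N+1) = v (-N+1) := by
    have := per (-N+1)
    rw [show -N+1+2*N = N+1 by ring] at this
    exact this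
  simp only [QnlAux.flux]
  rw [if_neg (show ¬(N+1 ≤ -K-1) by omega), if_neg (show ¬(N+1 = -K) by omega),
    if_neg (show ¬(N+1 ≤ K) by omega), if_neg (show ¬(N+1 = K+1) by omega),
    if_pos (show -N+1 ≤ -K-1 by omega), e0, e1]

lemma QnlAux.part1 (N K : ℤ) (hN : 1 ≤ N) (hK : 2 ≤ K) (hKN : K ≤ N - 2)
    (a b h : ℝ) (hb : b < 0) (hh0 : 0 < h) (ν : ℝ) (hν : ν = a + 4*b)
    (v : ℤ → ℝ) (per : ∀ j, v (j + 2*N) = v j) :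
    h * ∑ j ∈ Finset.Icc (-N+1) N, v j * Lqnl a b h K v j
      ≥ ν * (h * ∑ j ∈ Finset.Icc (-N+1) N, ((v j - v (j-1))/h)^2) := by
  have hh : h ≠ 0 := ne_of_gt hh0
  have hsum : ∑ j ∈ Finset.Icc (-N+1) N, v j * Lqnl a b h K v j
      = (∑ j ∈ Finset.Icc (-N+1) N, (QnlAux.dens a b K v j
          + (QnlAux.flux a b K v (j+1) - QnlAux.flux a b K v j))) / h^2 := by
    rw [Finset.sum_div]
    exact Finset.sum_congr rfl (fun j _ => QnlAux.row_id a b h hh K hK v j)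
  rw [hsum, Finset.sum_add_distrib,
    QnlAux.sum_tele (QnlAux.flux a b K v) (-N+1) N (by omega),
    QnlAux.flux_periodic_end N K hN hK hKN a b v per, sub_self, add_zero]
  have hrhs : ∑ j ∈ Finset.Icc (-N+1) N, ((v j - v (j-1))/h)^2
      = (∑ j ∈ Finset.Icc (-N+1) N, (v j - v (j-1))^2) / h^2 := by
    rw [Finset.sum_div]
    exact Finset.sum_congr rfl (fun j _ => by rw [div_pow])
  rw [hrhs]
  have hdge : ν * ∑ j ∈ Finset.Icc (-N+1) N, (v j - v (j-1))^2
      ≤ ∑ j ∈ Finset.Icc (-N+1) N, QnlAux.dens a b K v j := by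
    rw [Finset.mul_sum]
    apply Finset.sum_le_sum
    intro j _
    rw [QnlAux.dens, hν]
    have hite : (0:ℝ) ≤ (if -K ≤ j ∧ j ≤ K then (-b) * (v (j+1) - 2*v j + v (j-1))^2 else 0) := by
      split_ifs
      · have : (0:ℝ) ≤ -b := by linarith
        positivity
      · exact le_rfl
    exact le_add_of_nonneg_right hite
  have e2 : ν * (h * ((∑ j ∈ Finset.Icc (-N+1) N, (v j - v (j-1))^2) / h^2))
      = (ν * ∑ j ∈ Finset.Icc (-N+1) N, (v j - v (j-1))^2) / h := by
    field_simp
  have e3 : h * ((∑ j ∈ Finset.Icc (-N+1) N, QnlAux.dens a b K v j) / h^2)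
      = (∑ j ∈ Finset.Icc (-N+1) N, QnlAux.dens a b K v j) / h := by
    field_simp
  rw [ge_iff_le, e2, e3]
  exact (div_le_div_iff_of_pos_right hh0).mpr hdge

/-- Stability of the QNL operator: if `ν = φ''_F - 4|φ''_{2F}| > 0` then
`h v·L^{qnl,h}v ≥ ν ‖Dv‖²_{l²}` for all 2N-periodic `v`, and consequently a
mean-zero solution of `L^{qnl,h}v = b` with mean-zero data satisfies
`‖Dv‖_{l²} ≤ ‖b‖_{l²}/(2ν)`. -/
theorem qnl_stability (N K : ℤ) (hN : 1 ≤ N) (hK : 2 ≤ K) (hKN : K ≤ N - 2)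
    (a b h : ℝ) (ha : 0 < a) (hb : b < 0) (hh : h = 1 / (N : ℝ))
    (ν : ℝ) (hν : ν = a - 4 * |b|) (hν0 : 0 < ν) :
    (∀ v : ℤ → ℝ, (∀ j : ℤ, v (j + 2 * N) = v j) →
      h * ∑ j ∈ Finset.Icc (-N + 1) N, v j * Lqnl a b h K v j ≥
        ν * (h * ∑ j ∈ Finset.Icc (-N + 1) N, ((v j - v (j - 1)) / h) ^ 2)) ∧
    (∀ v rhs : ℤ → ℝ, (∀ j : ℤ, v (j + 2 * N) = v j) →
      (∀ j : ℤ, rhs (j + 2 * N) = rhs j) →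
      (∀ j ∈ Finset.Icc (-N + 1) N, Lqnl a b h K v j = rhs j) →
      (∑ j ∈ Finset.Icc (-N + 1) N, rhs j = 0) →
      (∑ j ∈ Finset.Icc (-N + 1) N, v j = 0) →
      Real.sqrt (h * ∑ j ∈ Finset.Icc (-N + 1) N, ((v j - v (j - 1)) / h) ^ 2) ≤
        (1 / (2 * ν)) * Real.sqrt (h * ∑ j ∈ Finset.Icc (-N + 1) N, (rhs j) ^ 2)) := by
  have hNpos : (0:ℝ) < (N:ℝ) := by exact_mod_cast (by omega : (0:ℤ) < N)
  have hh0 : 0 < h := by rw [hh]; positivity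
  have hνe : ν = a + 4*b := by rw [hν, abs_of_neg hb]; ring
  constructor
  · intro v per
    exact QnlAux.part1 N K hN hK hKN a b h hb hh0 ν hνe v per
  · intro v rhs per perr hLv hsum0 hmean
    have hSΔnn : (0:ℝ) ≤ ∑ j ∈ Finset.Icc (-N+1) N, (v j - v (j-1))^2 :=
      Finset.sum_nonneg (fun j _ => sq_nonneg _)
    have hS1nn : (0:ℝ) ≤ ∑ j ∈ Finset.Icc (-N+1) N, (v j)^2 :=
      Finset.sum_nonneg (fun j _ => sq_nonneg _)
    have hXeq : h * ∑ j ∈ Finset.Icc (-N + 1) N, ((v j - v (j - 1)) / h) ^ 2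
        = (∑ j ∈ Finset.Icc (-N+1) N, (v j - v (j-1))^2) / h := by
      rw [Finset.sum_congr rfl (fun j (_ : j ∈ Finset.Icc (-N+1) N) =>
        div_pow (v j - v (j-1)) h 2), ← Finset.sum_div]
      field_simp
    have step1 : ν * ((∑ j ∈ Finset.Icc (-N+1) N, (v j - v (j-1))^2) / h)
        ≤ h * ∑ j ∈ Finset.Icc (-N+1) N, v j * rhs j := by
      have hp := QnlAux.part1 N K hN hK hKN a b h hb hh0 ν hνe v per
      rw [ge_iff_le, hXeq] at hp
      calc ν * ((∑ j ∈ Finset.Icc (-N+1) N, (v j - v (j-1))^2) / h)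
          ≤ h * ∑ j ∈ Finset.Icc (-N+1) N, v j * Lqnl a b h K v j := hp
        _ = h * ∑ j ∈ Finset.Icc (-N+1) N, v j * rhs j := by
            congr 1
            exact Finset.sum_congr rfl (fun j hj => by rw [hLv j hj])
    have step2 : ∑ j ∈ Finset.Icc (-N+1) N, v j * rhs j
        ≤ Real.sqrt (∑ j ∈ Finset.Icc (-N+1) N, (v j)^2)
          * Real.sqrt (∑ j ∈ Finset.Icc (-N+1) N, (rhs j)^2) := by
      have hcs := Finset.sum_mul_sq_le_sq_mul_sq (Finset.Icc (-N+1) N) v rhs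
      calc ∑ j ∈ Finset.Icc (-N+1) N, v j * rhs j
          ≤ |∑ j ∈ Finset.Icc (-N+1) N, v j * rhs j| := le_abs_self _
        _ = Real.sqrt ((∑ j ∈ Finset.Icc (-N+1) N, v j * rhs j)^2) :=
            (Real.sqrt_sq_eq_abs _).symm
        _ ≤ Real.sqrt ((∑ j ∈ Finset.Icc (-N+1) N, (v j)^2)
              * ∑ j ∈ Finset.Icc (-N+1) N, (rhs j)^2) := Real.sqrt_le_sqrt hcs
        _ = _ := Real.sqrt_mul hS1nn _
    have poin := QnlAux.poincare N hN v per hmean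
    have hhN : h * (N:ℝ) = 1 := by rw [hh]; field_simp
    have hS1h : h * ∑ j ∈ Finset.Icc (-N+1) N, (v j)^2
        ≤ ((∑ j ∈ Finset.Icc (-N+1) N, (v j - v (j-1))^2) / h) / 4 := by
      calc h * ∑ j ∈ Finset.Icc (-N+1) N, (v j)^2
          ≤ h * ((N:ℝ)^2/4 * ∑ j ∈ Finset.Icc (-N+1) N, (v j - v (j-1))^2) :=
            mul_le_mul_of_nonneg_left poin hh0.le
        _ = (h*(N:ℝ))^2 * (((∑ j ∈ Finset.Icc (-N+1) N, (v j - v (j-1))^2) / h) / 4) := by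
            field_simp
        _ = ((∑ j ∈ Finset.Icc (-N+1) N, (v j - v (j-1))^2) / h) / 4 := by
            rw [hhN, one_pow, one_mul]
    have hXnn : (0:ℝ) ≤ (∑ j ∈ Finset.Icc (-N+1) N, (v j - v (j-1))^2) / h :=
      div_nonneg hSΔnn hh0.le
    have sqrt_split : Real.sqrt (h * ∑ j ∈ Finset.Icc (-N+1) N, (v j)^2)
        * Real.sqrt (h * ∑ j ∈ Finset.Icc (-N+1) N, (rhs j)^2)
        = h * (Real.sqrt (∑ j ∈ Finset.Icc (-N+1) N, (v j)^2)
          * Real.sqrt (∑ j ∈ Finset.Icc (-N+1) N, (rhs j)^2)) := by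
      rw [Real.sqrt_mul hh0.le, Real.sqrt_mul hh0.le,
        show Real.sqrt h * Real.sqrt (∑ j ∈ Finset.Icc (-N+1) N, (v j)^2)
          * (Real.sqrt h * Real.sqrt (∑ j ∈ Finset.Icc (-N+1) N, (rhs j)^2))
          = (Real.sqrt h * Real.sqrt h) * (Real.sqrt (∑ j ∈ Finset.Icc (-N+1) N, (v j)^2)
            * Real.sqrt (∑ j ∈ Finset.Icc (-N+1) N, (rhs j)^2)) by ring,
        Real.mul_self_sqrt hh0.le]
    have sqrt_poin : Real.sqrt (h * ∑ j ∈ Finset.Icc (-N+1) N, (v j)^2)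
        ≤ Real.sqrt ((∑ j ∈ Finset.Icc (-N+1) N, (v j - v (j-1))^2) / h) / 2 := by
      calc Real.sqrt (h * ∑ j ∈ Finset.Icc (-N+1) N, (v j)^2)
          ≤ Real.sqrt (((∑ j ∈ Finset.Icc (-N+1) N, (v j - v (j-1))^2) / h) / 4) :=
            Real.sqrt_le_sqrt hS1h
        _ = Real.sqrt ((∑ j ∈ Finset.Icc (-N+1) N, (v j - v (j-1))^2) / h) / 2 := by
            rw [show ((∑ j ∈ Finset.Icc (-N+1) N, (v j - v (j-1))^2) / h) / 4
              = ((∑ j ∈ Finset.Icc (-N+1) N, (v j - v (j-1))^2) / h) * (1/2)^2 by ring,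
              Real.sqrt_mul hXnn, Real.sqrt_sq (by norm_num : (0:ℝ) ≤ 1/2)]
            ring
    -- combine everything
    rw [hXeq]
    set sX := Real.sqrt ((∑ j ∈ Finset.Icc (-N+1) N, (v j - v (j-1))^2) / h) with hsX
    set sY := Real.sqrt (h * ∑ j ∈ Finset.Icc (-N+1) N, (rhs j)^2) with hsY
    have hsXnn : 0 ≤ sX := Real.sqrt_nonneg _
    have hsYnn : 0 ≤ sY := Real.sqrt_nonneg _
    have key : ν * sX^2 ≤ (sX/2) * sY := by
      rw [hsX, Real.sq_sqrt hXnn]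
      calc ν * ((∑ j ∈ Finset.Icc (-N+1) N, (v j - v (j-1))^2) / h)
          ≤ h * ∑ j ∈ Finset.Icc (-N+1) N, v j * rhs j := step1
        _ ≤ h * (Real.sqrt (∑ j ∈ Finset.Icc (-N+1) N, (v j)^2)
            * Real.sqrt (∑ j ∈ Finset.Icc (-N+1) N, (rhs j)^2)) :=
            mul_le_mul_of_nonneg_left step2 hh0.le
        _ = Real.sqrt (h * ∑ j ∈ Finset.Icc (-N+1) N, (v j)^2) * sY := by
            rw [sqrt_split]
        _ ≤ (sX/2) * sY := by
            apply mul_le_mul_of_nonneg_right _ hsYnn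
            rw [hsX]
            exact sqrt_poin
    rcases eq_or_lt_of_le hsXnn with h0 | h0
    · rw [← h0]
      positivity
    · have h5 : ν * sX ≤ sY/2 := by nlinarith [key, h0]
      rw [show (1/(2*ν)) * sY = sY/(2*ν) by ring, le_div_iff₀ (by positivity)]
      nlinarith [h5]
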